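/- For every n ≥ 0, the polynomial identity 1 - P_{φ^n(1)}(X) = X^{(1+(-1)^n)/2} · Π_{m=0}^{n-1} (X^{|φ^m(1)|} - 1) holds, where P_w(X) = (-X)^k + Σ_{i=1}^k a_i (-X)^{k-i} for a word w = a_1⋯a_k over {1,2}, and φ is the morphism φ(1)=2, φ(2)=211. -/
import Mathlib


/-- The morphism φ on the alphabet {1,2}: φ(1) = 2, φ(2) = 211. -/
def phi : ℕ → List ℕ
  | 1 => [2]
  | 2 => [2, 1, 1]
  | _ => []

/-- Extension of φ to words by concatenation. -/
def phiW (w : List ℕ) : List ℕ := w.flatMap phi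

/-- The polynomial P_{a₁⋯a_k}(X) = (-X)^k + Σ_{i=1}^k a_i (-X)^{k-i}, evaluated at x. -/
def P (w : List ℕ) (x : ℝ) : ℝ :=
  (-x) ^ w.length + ∑ i ∈ Finset.range w.length, (w.getD i 0 : ℝ) * (-x) ^ (w.length - 1 - i)

lemma P_append (u v : List ℕ) (x : ℝ) :
    P (u ++ v) x = (-x) ^ v.length * P u x + P v x - (-x) ^ v.length := by
  unfold P
  rw [List.length_append, Finset.sum_range_add]
  have h1 : ∀ i ∈ Finset.range u.length,
      ((u ++ v).getD i 0 : ℝ) * (-x) ^ (u.length + v.length - 1 - i)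
      = (-x) ^ v.length * ((u.getD i 0 : ℝ) * (-x) ^ (u.length - 1 - i)) := by
    intro i hi
    rw [Finset.mem_range] at hi
    rw [List.getD_append u v 0 i hi]
    have he : u.length + v.length - 1 - i = (u.length - 1 - i) + v.length := by omega
    rw [he, pow_add]; ring
  have h2 : ∀ j ∈ Finset.range v.length,
      ((u ++ v).getD (u.length + j) 0 : ℝ) * (-x) ^ (u.length + v.length - 1 - (u.length + j))
      = (v.getD j 0 : ℝ) * (-x) ^ (v.length - 1 - j) := by
    intro j hj
    rw [Finset.mem_range] at hj
    rw [List.getD_append_right u v 0 (u.length + j) (by omega)]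
    have e1 : u.length + j - u.length = j := by omega
    have e2 : u.length + v.length - 1 - (u.length + j) = v.length - 1 - j := by omega
    rw [e1, e2]
  rw [Finset.sum_congr rfl h1, Finset.sum_congr rfl h2, ← Finset.mul_sum, pow_add]
  ring

lemma phiW_iter_append (n : ℕ) (u v : List ℕ) :
    phiW^[n] (u ++ v) = phiW^[n] u ++ phiW^[n] v := by
  induction n generalizing u v with
  | zero => simp
  | succ n ih =>
      rw [Function.iterate_succ_apply, Function.iterate_succ_apply,
        Function.iterate_succ_apply]
      show phiW^[n] ((u ++ v).flatMap phi) = _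
      rw [List.flatMap_append]
      exact ih _ _

lemma w_rec (n : ℕ) :
    phiW^[n+2] [1] = phiW^[n+1] [1] ++ phiW^[n] [1] ++ phiW^[n] [1] := by
  have h1 : phiW^[n+2] [1] = phiW^[n] (phiW (phiW [1])) := by
    rw [Function.iterate_succ_apply, Function.iterate_succ_apply]
  have h2 : phiW (phiW [1]) = [2] ++ [1] ++ [1] := rfl
  have h3 : phiW^[n+1] [1] = phiW^[n] [2] := by
    rw [Function.iterate_succ_apply]; rfl
  rw [h1, h2, phiW_iter_append, phiW_iter_append, h3]

lemma len_rec (n : ℕ) :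
    (phiW^[n+2] [1]).length
      = (phiW^[n+1] [1]).length + 2 * (phiW^[n] [1]).length := by
  rw [w_rec, List.length_append, List.length_append]; omega

lemma len_key (n : ℕ) :
    (phiW^[n+1] [1]).length + (if Even n then 1 else 0)
      = 2 * (phiW^[n] [1]).length + (if Even n then 0 else 1) := by
  induction n with
  | zero => decide
  | succ n ih =>
      have hr : (phiW^[n+1+1] [1]).length
          = (phiW^[n+1] [1]).length + 2 * (phiW^[n] [1]).length := len_rec n
      rcases Nat.even_or_odd n with hn | hn
      · have h1 : ¬ Even (n+1) := by simp [Nat.even_add_one, hn]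
        simp only [if_pos hn] at ih
        simp only [if_neg h1]
        omega
      · have hn' : ¬ Even n := Nat.not_even_iff_odd.2 hn
        have h1 : Even (n+1) := by simpa [Nat.even_add_one] using hn'
        simp only [if_neg hn'] at ih
        simp only [if_pos h1]
        omega

lemma len_odd (n : ℕ) : Odd (phiW^[n] [1]).length := by
  cases n with
  | zero => exact ⟨0, rfl⟩
  | succ n =>
      have h := len_key n
      rcases Nat.even_or_odd n with hn | hn
      · simp only [hn, if_true] at h
        rw [Nat.odd_iff]; omega
      · simp only [Nat.not_even_iff_odd.2 hn, if_false] at h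
        rw [Nat.odd_iff]; omega

theorem one_sub_P_phi_one (n : ℕ) (x : ℝ) :
    1 - P (phiW^[n] [1]) x
      = x ^ (if Even n then 1 else 0) * ∏ m ∈ Finset.range n, (x ^ (phiW^[m] [1]).length - 1) := by
  induction n using Nat.twoStepInduction with
  | zero => norm_num [P]
  | one =>
      have h : phiW^[1] [1] = [2] := rfl
      rw [h]
      norm_num [P, phiW]
      ring
  | more n ih0 ih1 =>
      have key : 1 - P (phiW^[n+2] [1]) x
          = (x ^ (phiW^[n] [1]).length) ^ 2 * (1 - P (phiW^[n+1] [1]) x)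
            - (x ^ (phiW^[n] [1]).length - 1) * (1 - P (phiW^[n] [1]) x) := by
        rw [w_rec, P_append, P_append, Odd.neg_pow (len_odd n)]
        ring
      have hp2 : ∏ m ∈ Finset.range (n+2), (x ^ (phiW^[m] [1]).length - 1)
          = (∏ m ∈ Finset.range (n+1), (x ^ (phiW^[m] [1]).length - 1))
            * (x ^ (phiW^[n+1] [1]).length - 1) := Finset.prod_range_succ _ _
      have hp1 : ∏ m ∈ Finset.range (n+1), (x ^ (phiW^[m] [1]).length - 1)
          = (∏ m ∈ Finset.range n, (x ^ (phiW^[m] [1]).length - 1))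
            * (x ^ (phiW^[n] [1]).length - 1) := Finset.prod_range_succ _ _
      have hk := len_key n
      rcases Nat.even_or_odd n with hn | hn
      · have hn1 : ¬ Even (n+1) := by simp [Nat.even_add_one, hn]
        have hn2 : Even (n+2) := by
          rcases hn with ⟨k, hk'⟩; exact ⟨k+1, by omega⟩
        simp only [if_pos hn] at hk ih0
        simp only [if_neg hn1] at ih1
        rw [key, ih0, ih1, if_pos hn2, hp2, hp1, pow_zero, pow_one, one_mul]
        have e : (x ^ (phiW^[n] [1]).length) ^ 2
            = x * x ^ (phiW^[n+1] [1]).length := by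
          rw [← pow_mul]
          have h2 : (phiW^[n] [1]).length * 2 = (phiW^[n+1] [1]).length + 1 := by omega
          rw [h2, pow_succ]; ring
        linear_combination ((x ^ (phiW^[n] [1]).length - 1)
          * ∏ m ∈ Finset.range n, (x ^ (phiW^[m] [1]).length - 1)) * e
      · have hn' : ¬ Even n := Nat.not_even_iff_odd.2 hn
        have hn1 : Even (n+1) := by simpa [Nat.even_add_one] using hn'
        have hn2 : ¬ Even (n+2) := by
          intro ⟨k, hk'⟩; exact hn' ⟨k-1, by omega⟩
        simp only [if_neg hn'] at hk ih0
        simp only [if_pos hn1] at ih1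
        rw [key, ih0, ih1, if_neg hn2, hp2, hp1, pow_zero, pow_one, one_mul]
        have e : (x ^ (phiW^[n] [1]).length) ^ 2 * x
            = x ^ (phiW^[n+1] [1]).length := by
          rw [← pow_mul]
          have h2 : (phiW^[n+1] [1]).length = (phiW^[n] [1]).length * 2 + 1 := by omega
          rw [h2, pow_succ]
        linear_combination ((x ^ (phiW^[n] [1]).length - 1)
          * ∏ m ∈ Finset.range n, (x ^ (phiW^[m] [1]).length - 1)) * e
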